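/- arXiv:1708.07441 — 7 statements merged into one kernel-verified Lean document; each statement's English description precedes it below -/
import Mathlib

section
/- Let B ⊆ ℝⁿ be measurable, L_λ : ℝⁿ → ℝ bounded below by L_min on B, with ∫_B exp(-δ₀ L_λ(θ)) dθ finite and positive for δ₀ ≥ 0, and suppose ∫_B L_λ(θ)·exp(-δ₀ L_λ(θ)) dθ < ∞. Let C ⊆ B be measurable and define Δ(δ) = (∫_C exp(-δ L_λ(θ)) dθ) / (∫_B exp(-δ L_λ(θ)) dθ) for δ > δ₀. Then Δ is differentiable on (δ₀, ∞) with Δ'(δ) = (-1 + Δ(δ))·∫_C L_λ(θ) p_δ(θ) dθ + Δ(δ)·∫_{B∖C} L_λ(θ) p_δ(θ) dθ, where p_δ(θ) = exp(-δ L_λ(θ)) / ∫_B exp(-δ L_λ(γ)) dγ. -/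
open MeasureTheory Real

theorem stmt1 {n : ℕ} (B C : Set (EuclideanSpace ℝ (Fin n)))
    (hB : MeasurableSet B) (hC : MeasurableSet C) (hCB : C ⊆ B)
    (Ll : EuclideanSpace ℝ (Fin n) → ℝ) (hLl : Measurable Ll)
    (Lmin δ₀ : ℝ) (hδ₀ : 0 ≤ δ₀)
    (hbdd : ∀ θ ∈ B, Lmin ≤ Ll θ)
    (hint : IntegrableOn (fun θ => Real.exp (-δ₀ * Ll θ)) B)
    (hpos : 0 < ∫ θ in B, Real.exp (-δ₀ * Ll θ))
    (hint2 : IntegrableOn (fun θ => Ll θ * Real.exp (-δ₀ * Ll θ)) B) :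
    ∀ δ, δ₀ < δ →
      HasDerivAt (fun t => (∫ θ in C, Real.exp (-t * Ll θ)) / (∫ θ in B, Real.exp (-t * Ll θ)))
        ((-1 + (∫ θ in C, Real.exp (-δ * Ll θ)) / (∫ θ in B, Real.exp (-δ * Ll θ))) *
            (∫ θ in C, Ll θ * (Real.exp (-δ * Ll θ) / ∫ γ in B, Real.exp (-δ * Ll γ))) +
          ((∫ θ in C, Real.exp (-δ * Ll θ)) / (∫ θ in B, Real.exp (-δ * Ll θ))) *
            (∫ θ in B \ C, Ll θ * (Real.exp (-δ * Ll θ) / ∫ γ in B, Real.exp (-δ * Ll γ))))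
        δ := by
  intro δ hδ
  set ε : ℝ := (δ - δ₀) / 2 with hεdef
  have hεpos : 0 < ε := by simp only [hεdef]; linarith
  set K : ℝ := Real.exp ((δ + ε - δ₀) * |Lmin|) with hKdef
  have hKnn : 0 ≤ K := le_of_lt (Real.exp_pos _)
  -- key exponential bound
  have hub : ∀ θ ∈ B, ∀ t : ℝ, δ₀ ≤ t → t ≤ δ + ε →
      Real.exp (-t * Ll θ) ≤ K * Real.exp (-δ₀ * Ll θ) := by
    intro θ hθ t ht1 ht2
    have h1 : -t * Ll θ = (-(t - δ₀) * Ll θ) + (-δ₀ * Ll θ) := by ring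
    rw [h1, Real.exp_add, hKdef]
    have hexp : Real.exp (-(t - δ₀) * Ll θ) ≤ Real.exp ((δ + ε - δ₀) * |Lmin|) := by
      apply Real.exp_le_exp.mpr
      have hL := hbdd θ hθ
      have h2 : -(t - δ₀) * Ll θ ≤ (t - δ₀) * |Lmin| := by
        have ha : -(t - δ₀) * Ll θ ≤ -(t - δ₀) * Lmin := by nlinarith
        have h3 : -(t - δ₀) * Lmin ≤ (t - δ₀) * |Lmin| := by
          rcases abs_cases Lmin with ⟨h, _⟩ | ⟨h, _⟩ <;> nlinarith
        linarith
      have h4 : (t - δ₀) * |Lmin| ≤ (δ + ε - δ₀) * |Lmin| := by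
        have := abs_nonneg Lmin; nlinarith
      linarith
    exact mul_le_mul_of_nonneg_right hexp (le_of_lt (Real.exp_pos _))
  -- main differentiation-under-integral lemma
  have key : ∀ S : Set (EuclideanSpace ℝ (Fin n)), MeasurableSet S → S ⊆ B →
      IntegrableOn (fun θ => Real.exp (-δ * Ll θ)) S ∧
      IntegrableOn (fun θ => Ll θ * Real.exp (-δ * Ll θ)) S ∧
      HasDerivAt (fun t => ∫ θ in S, Real.exp (-t * Ll θ))
        (-∫ θ in S, Ll θ * Real.exp (-δ * Ll θ)) δ := by
    intro S hS hSB
    have hmem : ∀ᵐ θ ∂(volume.restrict S), θ ∈ S := ae_restrict_mem hS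
    have hintS : IntegrableOn (fun θ => Real.exp (-δ₀ * Ll θ)) S := hint.mono_set hSB
    have hint2S : IntegrableOn (fun θ => Ll θ * Real.exp (-δ₀ * Ll θ)) S := hint2.mono_set hSB
    have hmeas : ∀ t : ℝ, AEStronglyMeasurable (fun θ => Real.exp (-t * Ll θ))
        (volume.restrict S) := fun t => ((hLl.const_mul (-t)).exp).aestronglyMeasurable
    have hmeas' : AEStronglyMeasurable (fun θ => -(Ll θ) * Real.exp (-δ * Ll θ))
        (volume.restrict S) :=
      (hLl.neg.mul ((hLl.const_mul (-δ)).exp)).aestronglyMeasurable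
    have hF_int : Integrable (fun θ => Real.exp (-δ * Ll θ)) (volume.restrict S) := by
      refine (hintS.const_mul K).mono' (hmeas δ) ?_
      filter_upwards [hmem] with θ hθ
      rw [Real.norm_eq_abs, abs_of_pos (Real.exp_pos _)]
      exact hub θ (hSB hθ) δ (le_of_lt hδ) (by linarith)
    have hbound_int : Integrable (fun θ => K * |Ll θ * Real.exp (-δ₀ * Ll θ)|)
        (volume.restrict S) := hint2S.abs.const_mul K
    have hres := hasDerivAt_integral_of_dominated_loc_of_deriv_le (μ := volume.restrict S)
      (F := fun t θ => Real.exp (-t * Ll θ))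
      (F' := fun t θ => -(Ll θ) * Real.exp (-t * Ll θ))
      (bound := fun θ => K * |Ll θ * Real.exp (-δ₀ * Ll θ)|)
      (Metric.ball_mem_nhds δ hεpos) (Filter.Eventually.of_forall fun t => hmeas t) hF_int hmeas'
      ?_ hbound_int ?_
    · refine ⟨hF_int, ?_, ?_⟩
      · have heq : (fun θ => Ll θ * Real.exp (-δ * Ll θ))
            = fun θ => -(-(Ll θ) * Real.exp (-δ * Ll θ)) := by funext θ; ring
        rw [IntegrableOn, heq]
        exact hres.1.neg
      · have := hres.2
        rw [show (∫ θ in S, -(Ll θ) * Real.exp (-δ * Ll θ))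
            = -∫ θ in S, Ll θ * Real.exp (-δ * Ll θ) by
          rw [← integral_neg]; simp] at this
        exact this
    · filter_upwards [hmem] with θ hθ
      intro t ht
      rw [Metric.mem_ball, Real.dist_eq, abs_lt] at ht
      have ht1 : δ₀ ≤ t := by simp only [hεdef] at ht ⊢; linarith
      have ht2 : t ≤ δ + ε := le_of_lt (by linarith [ht.2])
      rw [norm_mul, norm_neg, Real.norm_eq_abs, Real.norm_eq_abs,
        abs_of_pos (Real.exp_pos _), abs_mul, abs_of_pos (Real.exp_pos _)]
      have := hub θ (hSB hθ) t ht1 ht2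
      have habs : 0 ≤ |Ll θ| := abs_nonneg _
      nlinarith [Real.exp_pos (-t * Ll θ), Real.exp_pos (-δ₀ * Ll θ)]
    · filter_upwards with θ
      intro t _
      have h1 : HasDerivAt (fun s : ℝ => -s * Ll θ) (-(Ll θ)) t := by
        simpa using ((hasDerivAt_id t).neg.mul_const (Ll θ))
      have := h1.exp
      simpa [mul_comm] using this
  obtain ⟨hFB_int, hIB, hFB⟩ := key B hB subset_rfl
  obtain ⟨hFC_int, hIC, hFC⟩ := key C hC hCB
  -- positivity of denominator
  have hμB : 0 < volume B := by
    have h := (setIntegral_pos_iff_support_of_nonneg_ae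
      (Filter.Eventually.of_forall fun θ => le_of_lt (Real.exp_pos _)) hint).mp hpos
    have hsupp : Function.support (fun θ => Real.exp (-δ₀ * Ll θ)) = Set.univ := by
      ext θ; simp [Function.support, Real.exp_ne_zero]
    rwa [hsupp, Set.univ_inter] at h
  have hFpos : 0 < ∫ θ in B, Real.exp (-δ * Ll θ) := by
    have h := (setIntegral_pos_iff_support_of_nonneg_ae
      (Filter.Eventually.of_forall fun θ => le_of_lt (Real.exp_pos _)) hFB_int)
    rw [h]
    have hsupp : Function.support (fun θ => Real.exp (-δ * Ll θ)) = Set.univ := by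
      ext θ; simp [Function.support, Real.exp_ne_zero]
    rwa [hsupp, Set.univ_inter]
  have hF0 : (∫ θ in B, Real.exp (-δ * Ll θ)) ≠ 0 := ne_of_gt hFpos
  have hdiv := hFC.div hFB hF0
  refine hdiv.congr_deriv ?_
  set F := ∫ θ in B, Real.exp (-δ * Ll θ)
  set G := ∫ θ in C, Real.exp (-δ * Ll θ)
  set IB := ∫ θ in B, Ll θ * Real.exp (-δ * Ll θ)
  set IC := ∫ θ in C, Ll θ * Real.exp (-δ * Ll θ)
  have e1 : (∫ θ in C, Ll θ * (Real.exp (-δ * Ll θ) / F)) = IC / F := by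
    simp_rw [← mul_div_assoc]
    exact integral_div F _
  have e2 : (∫ θ in B \ C, Ll θ * (Real.exp (-δ * Ll θ) / F)) = (IB - IC) / F := by
    simp_rw [← mul_div_assoc]
    rw [integral_div F _, integral_diff hC hIB hCB]
  rw [e1, e2]
  field_simp
  ring
end

section
/- With the setup of the previous statement, and with C = {θ ∈ B : L_λ(θ) ≤ M_λ} for a fixed threshold M_λ, suppose both C and B∖C have positive measure. Then Δ is strictly increasing on (δ₀, ∞); in fact Δ'(δ) > 0 for all δ > δ₀. -/
open MeasureTheory Real

private lemma exp_bound' {L Lmin δ₀ x b : ℝ} (hL : Lmin ≤ L) (hx0 : δ₀ ≤ x) (hxb : x ≤ b) :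
    Real.exp (-x * L) ≤ Real.exp ((b - δ₀) * |Lmin|) * Real.exp (-δ₀ * L) := by
  rw [← Real.exp_add]
  apply Real.exp_le_exp.mpr
  nlinarith [abs_nonneg Lmin, neg_abs_le Lmin, le_abs_self Lmin]

private lemma int_exp' {n : ℕ} {B S : Set (EuclideanSpace ℝ (Fin n))}
    {Ll : EuclideanSpace ℝ (Fin n) → ℝ} (hLl : Measurable Ll)
    {Lmin δ₀ : ℝ} (hbdd : ∀ θ ∈ B, Lmin ≤ Ll θ)
    (hint : IntegrableOn (fun θ => Real.exp (-δ₀ * Ll θ)) B)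
    (hSB : S ⊆ B) (hS : MeasurableSet S) {t : ℝ} (ht : δ₀ ≤ t) :
    IntegrableOn (fun θ => Real.exp (-t * Ll θ)) S := by
  have hint' : IntegrableOn
      (fun θ => Real.exp ((t - δ₀) * |Lmin|) * Real.exp (-δ₀ * Ll θ)) S :=
    (hint.mono_set hSB).const_mul _
  refine hint'.mono' ((hLl.const_mul (-t)).exp.aestronglyMeasurable) ?_
  filter_upwards [ae_restrict_mem hS] with θ hθ
  rw [Real.norm_eq_abs, abs_of_pos (Real.exp_pos _)]
  exact exp_bound' (hbdd θ (hSB hθ)) ht le_rfl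

private lemma int_Lexp' {n : ℕ} {B S : Set (EuclideanSpace ℝ (Fin n))}
    {Ll : EuclideanSpace ℝ (Fin n) → ℝ} (hLl : Measurable Ll)
    {Lmin δ₀ : ℝ} (hbdd : ∀ θ ∈ B, Lmin ≤ Ll θ)
    (hint2 : IntegrableOn (fun θ => Ll θ * Real.exp (-δ₀ * Ll θ)) B)
    (hSB : S ⊆ B) (hS : MeasurableSet S) {t : ℝ} (ht : δ₀ ≤ t) :
    IntegrableOn (fun θ => Ll θ * Real.exp (-t * Ll θ)) S := by
  have hint' : IntegrableOn
      (fun θ => Real.exp ((t - δ₀) * |Lmin|) * ‖Ll θ * Real.exp (-δ₀ * Ll θ)‖) S :=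
    (hint2.mono_set hSB).norm.const_mul _
  refine hint'.mono' (((hLl.mul (hLl.const_mul (-t)).exp)).aestronglyMeasurable) ?_
  filter_upwards [ae_restrict_mem hS] with θ hθ
  rw [Real.norm_eq_abs, Real.norm_eq_abs, abs_mul, abs_mul,
    abs_of_pos (Real.exp_pos _), abs_of_pos (Real.exp_pos _),
    ← mul_assoc, mul_comm (Real.exp ((t - δ₀) * |Lmin|)) |Ll θ|, mul_assoc]
  exact mul_le_mul_of_nonneg_left
    (exp_bound' (hbdd θ (hSB hθ)) ht le_rfl) (abs_nonneg _)

private lemma hasDeriv_int' {n : ℕ} {B S : Set (EuclideanSpace ℝ (Fin n))}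
    {Ll : EuclideanSpace ℝ (Fin n) → ℝ} (hLl : Measurable Ll)
    {Lmin δ₀ : ℝ} (hbdd : ∀ θ ∈ B, Lmin ≤ Ll θ)
    (hint : IntegrableOn (fun θ => Real.exp (-δ₀ * Ll θ)) B)
    (hint2 : IntegrableOn (fun θ => Ll θ * Real.exp (-δ₀ * Ll θ)) B)
    (hSB : S ⊆ B) (hS : MeasurableSet S) {δ : ℝ} (hδ : δ₀ < δ) :
    HasDerivAt (fun t => ∫ θ in S, Real.exp (-t * Ll θ))
      (∫ θ in S, -(Ll θ * Real.exp (-δ * Ll θ))) δ := by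
  have hεpos : 0 < (δ - δ₀) / 2 := by linarith
  have key := hasDerivAt_integral_of_dominated_loc_of_deriv_le
    (μ := volume.restrict S) (x₀ := δ)
    (F := fun x θ => Real.exp (-x * Ll θ))
    (F' := fun x θ => -(Ll θ * Real.exp (-x * Ll θ)))
    (bound := fun θ => Real.exp ((δ + (δ - δ₀) / 2 - δ₀) * |Lmin|) *
      ‖Ll θ * Real.exp (-δ₀ * Ll θ)‖)
    (Metric.ball_mem_nhds δ hεpos)
    (Filter.Eventually.of_forall
      (fun x => (hLl.const_mul (-x)).exp.aestronglyMeasurable))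
    (int_exp' hLl hbdd hint hSB hS hδ.le)
    ((hLl.mul (hLl.const_mul (-δ)).exp).neg.aestronglyMeasurable)
    ?_ ((hint2.mono_set hSB).norm.const_mul _) ?_
  · exact key.2
  · filter_upwards [ae_restrict_mem hS] with θ hθ x hx
    rw [Metric.mem_ball, Real.dist_eq, abs_lt] at hx
    have hx1 : δ₀ ≤ x := by linarith [hx.1]
    have hx2 : x ≤ δ + (δ - δ₀) / 2 := by linarith [hx.2]
    rw [norm_neg, Real.norm_eq_abs, Real.norm_eq_abs, abs_mul, abs_mul,
      abs_of_pos (Real.exp_pos _), abs_of_pos (Real.exp_pos _),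
      ← mul_assoc, mul_comm (Real.exp _) |Ll θ|, mul_assoc]
    exact mul_le_mul_of_nonneg_left
      (exp_bound' (hbdd θ (hSB hθ)) hx1 hx2) (abs_nonneg _)
  · refine Filter.Eventually.of_forall (fun θ x _ => ?_)
    have h1 : HasDerivAt (fun x : ℝ => -x * Ll θ) (-Ll θ) x := by
      simpa using (hasDerivAt_id x).neg.mul_const (Ll θ)
    have h2 := (Real.hasDerivAt_exp (-x * Ll θ)).comp x h1
    exact h2.congr_deriv (by ring)

theorem stmt2 {n : ℕ} (B : Set (EuclideanSpace ℝ (Fin n))) (hB : MeasurableSet B)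
    (Ll : EuclideanSpace ℝ (Fin n) → ℝ) (hLl : Measurable Ll)
    (Lmin δ₀ Ml : ℝ) (hδ₀ : 0 ≤ δ₀)
    (hbdd : ∀ θ ∈ B, Lmin ≤ Ll θ)
    (hint : IntegrableOn (fun θ => Real.exp (-δ₀ * Ll θ)) B)
    (hpos : 0 < ∫ θ in B, Real.exp (-δ₀ * Ll θ))
    (hint2 : IntegrableOn (fun θ => Ll θ * Real.exp (-δ₀ * Ll θ)) B)
    (C : Set (EuclideanSpace ℝ (Fin n))) (hCdef : C = {θ ∈ B | Ll θ ≤ Ml})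
    (hCpos : 0 < volume C) (hBCpos : 0 < volume (B \ C)) :
    StrictMonoOn
        (fun t => (∫ θ in C, Real.exp (-t * Ll θ)) / (∫ θ in B, Real.exp (-t * Ll θ)))
        (Set.Ioi δ₀) ∧
      ∀ δ ∈ Set.Ioi δ₀,
        0 < deriv (fun t => (∫ θ in C, Real.exp (-t * Ll θ)) /
            (∫ θ in B, Real.exp (-t * Ll θ))) δ := by
  have hCB : C ⊆ B := fun θ hθ => by rw [hCdef] at hθ; exact hθ.1
  have hC : MeasurableSet C := by
    rw [hCdef]; exact hB.inter (hLl measurableSet_Iic)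
  have hD : MeasurableSet (B \ C) := hB.diff hC
  have hDB : B \ C ⊆ B := Set.diff_subset
  have hBsub : B ⊆ B := subset_rfl
  have hIpos : ∀ (S : Set (EuclideanSpace ℝ (Fin n))), MeasurableSet S → S ⊆ B →
      0 < volume S → ∀ t, δ₀ ≤ t → 0 < ∫ θ in S, Real.exp (-t * Ll θ) := by
    intro S hS hSB hSpos t ht
    rw [setIntegral_pos_iff_support_of_nonneg_ae
      (Filter.Eventually.of_forall fun θ => (Real.exp_pos _).le)
      (int_exp' hLl hbdd hint hSB hS ht)]
    have hsupp : Function.support (fun θ : EuclideanSpace ℝ (Fin n) =>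
        Real.exp (-t * Ll θ)) = Set.univ := by
      ext θ; simp [Function.mem_support, Real.exp_ne_zero]
    rw [hsupp, Set.univ_inter]; exact hSpos
  have hBpos : 0 < volume B := lt_of_lt_of_le hCpos (measure_mono hCB)
  have hsplit : ∀ f : EuclideanSpace ℝ (Fin n) → ℝ, IntegrableOn f C →
      IntegrableOn f (B \ C) →
      ∫ θ in B, f θ = (∫ θ in C, f θ) + ∫ θ in B \ C, f θ := by
    intro f h1 h2
    rw [← setIntegral_union Set.disjoint_sdiff_right hD h1 h2, Set.union_diff_cancel hCB]
  have key : ∀ δ ∈ Set.Ioi δ₀, ∃ v, 0 < v ∧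
      HasDerivAt (fun t => (∫ θ in C, Real.exp (-t * Ll θ)) /
        (∫ θ in B, Real.exp (-t * Ll θ))) v δ := by
    intro δ hδ
    rw [Set.mem_Ioi] at hδ
    have hF := hasDeriv_int' hLl hbdd hint hint2 hCB hC hδ
    have hG := hasDeriv_int' hLl hbdd hint hint2 hBsub hB hδ
    have hGpos := hIpos B hB hBsub hBpos δ hδ.le
    have hQ := hF.div hG (ne_of_gt hGpos)
    refine ⟨_, ?_, hQ⟩
    apply div_pos ?_ (by positivity)
    have ha : 0 < ∫ θ in C, Real.exp (-δ * Ll θ) := hIpos C hC hCB hCpos δ hδ.le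
    have hc : 0 < ∫ θ in B \ C, Real.exp (-δ * Ll θ) :=
      hIpos (B \ C) hD hDB hBCpos δ hδ.le
    have hb : (∫ θ in C, Ll θ * Real.exp (-δ * Ll θ)) ≤
        Ml * ∫ θ in C, Real.exp (-δ * Ll θ) := by
      rw [← integral_const_mul]
      apply setIntegral_mono_on (int_Lexp' hLl hbdd hint2 hCB hC hδ.le)
        ((int_exp' hLl hbdd hint hCB hC hδ.le).const_mul Ml) hC
      intro θ hθ
      rw [hCdef] at hθ
      exact mul_le_mul_of_nonneg_right hθ.2 (Real.exp_pos _).le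
    have hsub : 0 < ∫ θ in B \ C, (Ll θ - Ml) * Real.exp (-δ * Ll θ) := by
      have hintD : IntegrableOn
          (fun θ => (Ll θ - Ml) * Real.exp (-δ * Ll θ)) (B \ C) := by
        simp_rw [sub_mul]
        exact (int_Lexp' hLl hbdd hint2 hDB hD hδ.le).sub
          ((int_exp' hLl hbdd hint hDB hD hδ.le).const_mul Ml)
      have hMlt : ∀ θ ∈ B \ C, Ml < Ll θ := by
        intro θ hθ
        refine lt_of_not_ge fun h => hθ.2 ?_
        rw [hCdef]; exact ⟨hθ.1, h⟩
      rw [setIntegral_pos_iff_support_of_nonneg_ae ?_ hintD]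
      · refine lt_of_lt_of_le hBCpos (measure_mono fun θ hθ => ?_)
        refine ⟨Function.mem_support.mpr (ne_of_gt ?_), hθ⟩
        exact mul_pos (by linarith [hMlt θ hθ]) (Real.exp_pos _)
      · filter_upwards [ae_restrict_mem hD] with θ hθ
        exact (mul_pos (by linarith [hMlt θ hθ]) (Real.exp_pos _)).le
    have hd : Ml * (∫ θ in B \ C, Real.exp (-δ * Ll θ)) <
        ∫ θ in B \ C, Ll θ * Real.exp (-δ * Ll θ) := by
      have heq : (∫ θ in B \ C, (Ll θ - Ml) * Real.exp (-δ * Ll θ)) =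
          (∫ θ in B \ C, Ll θ * Real.exp (-δ * Ll θ)) -
            Ml * ∫ θ in B \ C, Real.exp (-δ * Ll θ) := by
        simp_rw [sub_mul]
        rw [integral_sub (int_Lexp' hLl hbdd hint2 hDB hD hδ.le)
          ((int_exp' hLl hbdd hint hDB hD hδ.le).const_mul Ml), integral_const_mul]
      rw [heq] at hsub
      linarith
    rw [integral_neg, integral_neg,
      hsplit _ (int_exp' hLl hbdd hint hCB hC hδ.le)
        (int_exp' hLl hbdd hint hDB hD hδ.le),
      hsplit _ (int_Lexp' hLl hbdd hint2 hCB hC hδ.le)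
        (int_Lexp' hLl hbdd hint2 hDB hD hδ.le)]
    nlinarith [ha, hb, hc, hd]
  have hderiv : ∀ δ ∈ Set.Ioi δ₀,
      0 < deriv (fun t => (∫ θ in C, Real.exp (-t * Ll θ)) /
        (∫ θ in B, Real.exp (-t * Ll θ))) δ := by
    intro δ hδ
    obtain ⟨v, hv, hdv⟩ := key δ hδ
    rw [hdv.deriv]; exact hv
  refine ⟨?_, hderiv⟩
  apply strictMonoOn_of_deriv_pos (convex_Ioi δ₀)
  · intro x hx
    obtain ⟨v, hv, hdv⟩ := key x hx
    exact hdv.differentiableAt.continuousAt.continuousWithinAt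
  · intro x hx
    rw [interior_Ioi] at hx
    exact hderiv x hx
end

section
/- Let B ⊆ ℝⁿ be a bounded measurable set, L_λ : ℝⁿ → ℝ continuous and bounded below on B, M_λ ∈ ℝ, and suppose there exists θ' in the interior of B with L_λ(θ') < M_λ. Let C = {θ ∈ B : L_λ(θ) ≤ M_λ} and Δ(δ) = (∫_C exp(-δ L_λ)) / (∫_B exp(-δ L_λ)). Then for every α ∈ (0,1) there exists δ > 0 such that Δ(δ) > α; i.e., Δ(δ) → 1 as δ → ∞ along a suitable sequence. -/
open MeasureTheory Real

theorem stmt3 {n : ℕ} (B : Set (EuclideanSpace ℝ (Fin n))) (hB : MeasurableSet B)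
    (hBbdd : Bornology.IsBounded B)
    (Ll : EuclideanSpace ℝ (Fin n) → ℝ) (hLl : ContinuousOn Ll B)
    (Lmin : ℝ) (hbdd : ∀ θ ∈ B, Lmin ≤ Ll θ)
    (Ml : ℝ) (θ' : EuclideanSpace ℝ (Fin n)) (hθ' : θ' ∈ interior B)
    (hθ'M : Ll θ' < Ml)
    (C : Set (EuclideanSpace ℝ (Fin n))) (hCdef : C = {θ ∈ B | Ll θ ≤ Ml}) :
    ∀ α ∈ Set.Ioo (0 : ℝ) 1, ∃ δ > (0 : ℝ),
      (∫ θ in C, Real.exp (-δ * Ll θ)) / (∫ θ in B, Real.exp (-δ * Ll θ)) > α := by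
  intro α hα
  obtain ⟨hα0, hα1⟩ := hα
  -- midpoint level
  set Mt : ℝ := (Ll θ' + Ml) / 2 with hMtdef
  have hMt1 : Ll θ' < Mt := by simp only [hMtdef]; linarith
  have hMt2 : Mt < Ml := by simp only [hMtdef]; linarith
  -- a small ball around θ' where Ll < Mt
  have hBnhds : B ∈ nhds θ' := mem_interior_iff_mem_nhds.mp hθ'
  have hcont : ContinuousAt Ll θ' := hLl.continuousAt hBnhds
  have hnhds : {x | Ll x < Mt} ∈ nhds θ' := hcont.preimage_mem_nhds (Iio_mem_nhds hMt1)
  obtain ⟨r, hr, hball⟩ := Metric.mem_nhds_iff.mp (Filter.inter_mem hnhds hBnhds)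
  have hballB : Metric.ball θ' r ⊆ B := fun x hx => (hball hx).2
  have hballC : Metric.ball θ' r ⊆ C := by
    rw [hCdef]; intro x hx
    exact ⟨(hball hx).2, le_of_lt (lt_trans (hball hx).1 hMt2)⟩
  set v : ℝ := (volume (Metric.ball θ' r)).toReal with hvdef
  have hvpos : 0 < v := by
    refine ENNReal.toReal_pos (Metric.measure_ball_pos volume θ' hr).ne' ?_
    exact measure_ball_lt_top.ne
  -- C is measurable
  have hCsub : C ⊆ B := by rw [hCdef]; exact fun x hx => hx.1
  have hCmeas : MeasurableSet C := by
    have hEq : C = Subtype.val '' ((B.restrict Ll) ⁻¹' Set.Iic Ml) := by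
      rw [hCdef]; ext x
      simp only [Set.mem_image, Set.mem_preimage, Set.restrict_apply, Set.mem_Iic,
        Subtype.exists, exists_and_right, exists_eq_right, Set.mem_setOf_eq]
      tauto
    rw [hEq]
    exact hB.subtype_image (hLl.restrict.measurable measurableSet_Iic)
  have hBfin : volume B < ⊤ := hBbdd.measure_lt_top
  have hDfin : volume (B \ C) < ⊤ := lt_of_le_of_lt (measure_mono Set.diff_subset) hBfin
  set w : ℝ := (volume (B \ C)).toReal with hwdef
  have hw0 : 0 ≤ w := ENNReal.toReal_nonneg
  -- choose δ
  set K : ℝ := α * w / ((1 - α) * v) with hKdef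
  set δ : ℝ := max 1 ((Real.log K + 1) / (Ml - Mt)) with hδdef
  have hδ1 : (1 : ℝ) ≤ δ := le_max_left _ _
  have hδ0 : (0 : ℝ) < δ := lt_of_lt_of_le one_pos hδ1
  refine ⟨δ, hδ0, ?_⟩
  have hMlMt : 0 < Ml - Mt := by linarith
  have hKexp : K < Real.exp (δ * (Ml - Mt)) := by
    have h2 : (Real.log K + 1) / (Ml - Mt) ≤ δ := le_max_right _ _
    have h3 : Real.log K + 1 ≤ δ * (Ml - Mt) := by
      rw [div_le_iff₀ hMlMt] at h2; linarith
    rcases le_or_gt K 0 with hK | hK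
    · exact lt_of_le_of_lt hK (Real.exp_pos _)
    · calc K = Real.exp (Real.log K) := (Real.exp_log hK).symm
        _ < Real.exp (Real.log K + 1) := by apply Real.exp_lt_exp.mpr; linarith
        _ ≤ Real.exp (δ * (Ml - Mt)) := Real.exp_le_exp.mpr h3
  -- integrability
  set f : EuclideanSpace ℝ (Fin n) → ℝ := fun θ => Real.exp (-δ * Ll θ) with hfdef
  have hfpos : ∀ x, 0 < f x := fun x => Real.exp_pos _
  have hmeas : AEStronglyMeasurable f (volume.restrict B) := by
    have h1 : AEMeasurable Ll (volume.restrict B) := hLl.aemeasurable hB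
    exact (Real.measurable_exp.comp_aemeasurable (h1.const_mul (-δ))).aestronglyMeasurable
  have hIntB : IntegrableOn f B := by
    refine ⟨hmeas, HasFiniteIntegral.restrict_of_bounded (C := Real.exp (-δ * Lmin)) hBfin ?_⟩
    filter_upwards [ae_restrict_mem hB] with x hx
    rw [Real.norm_eq_abs, abs_of_pos (hfpos x)]
    apply Real.exp_le_exp.mpr
    have := hbdd x hx
    nlinarith
  have hIntC : IntegrableOn f C := hIntB.mono_set hCsub
  have hIntD : IntegrableOn f (B \ C) := hIntB.mono_set Set.diff_subset
  have hIntBall : IntegrableOn f (Metric.ball θ' r) := hIntB.mono_set hballB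
  -- lower bound for the integral over C
  have hlow : Real.exp (-δ * Mt) * v ≤ ∫ θ in C, f θ := by
    have h1 : Real.exp (-δ * Mt) * v ≤ ∫ θ in Metric.ball θ' r, f θ := by
      refine setIntegral_ge_of_const_le_real measurableSet_ball measure_ball_lt_top.ne
        (fun x hx => ?_) hIntBall
      apply Real.exp_le_exp.mpr
      have h := (hball hx).1
      simp only [Set.mem_setOf_eq] at h
      nlinarith
    refine h1.trans (setIntegral_mono_set hIntC ?_ hballC.eventuallyLE)
    exact Filter.Eventually.of_forall fun x => (hfpos x).le
  -- upper bound for the integral over B \ C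
  have hup : (∫ θ in B \ C, f θ) ≤ Real.exp (-δ * Ml) * w := by
    have h1 : (∫ θ in B \ C, f θ) ≤ ∫ _ in B \ C, Real.exp (-δ * Ml) := by
      refine setIntegral_mono_on hIntD (integrableOn_const hDfin.ne)
        (hB.diff hCmeas) (fun x hx => ?_)
      apply Real.exp_le_exp.mpr
      have hx2 : ¬ (Ll x ≤ Ml) := by
        intro h; exact hx.2 (by rw [hCdef]; exact ⟨hx.1, h⟩)
      push_neg at hx2
      nlinarith
    rwa [setIntegral_const, smul_eq_mul, mul_comm] at h1
  have hICpos : 0 < ∫ θ in C, f θ := lt_of_lt_of_le (by positivity) hlow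
  have hIDnonneg : 0 ≤ ∫ θ in B \ C, f θ :=
    setIntegral_nonneg (hB.diff hCmeas) fun x _ => (hfpos x).le
  -- split the integral over B
  have hsplit : (∫ θ in B, f θ) = (∫ θ in C, f θ) + ∫ θ in B \ C, f θ := by
    have h := setIntegral_union (f := f) (μ := volume) Set.disjoint_sdiff_right
      (hB.diff hCmeas) hIntC hIntD
    rwa [Set.union_diff_cancel hCsub] at h
  have hIBpos : 0 < ∫ θ in B, f θ := by rw [hsplit]; linarith
  -- the key inequality
  have hkey : α * (∫ θ in B \ C, f θ) < (1 - α) * ∫ θ in C, f θ := by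
    have h1 : α * w < (1 - α) * v * Real.exp (δ * (Ml - Mt)) := by
      have hpos : 0 < (1 - α) * v := by nlinarith
      rw [hKdef, div_lt_iff₀ hpos] at hKexp
      nlinarith [Real.exp_pos (δ * (Ml - Mt))]
    have h2 : α * w * Real.exp (-δ * Ml) < (1 - α) * v * Real.exp (-δ * Mt) := by
      have hexp : Real.exp (δ * (Ml - Mt)) * Real.exp (-δ * Ml) = Real.exp (-δ * Mt) := by
        rw [← Real.exp_add]; ring_nf
      calc α * w * Real.exp (-δ * Ml)
          < (1 - α) * v * Real.exp (δ * (Ml - Mt)) * Real.exp (-δ * Ml) := by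
            exact mul_lt_mul_of_pos_right h1 (Real.exp_pos _)
        _ = (1 - α) * v * Real.exp (-δ * Mt) := by rw [mul_assoc, hexp]
    calc α * (∫ θ in B \ C, f θ) ≤ α * (Real.exp (-δ * Ml) * w) := by
          exact mul_le_mul_of_nonneg_left hup hα0.le
      _ = α * w * Real.exp (-δ * Ml) := by ring
      _ < (1 - α) * v * Real.exp (-δ * Mt) := h2
      _ = (1 - α) * (Real.exp (-δ * Mt) * v) := by ring
      _ ≤ (1 - α) * ∫ θ in C, f θ := by
          exact mul_le_mul_of_nonneg_left hlow (by linarith)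
  show α < _
  rw [lt_div_iff₀ hIBpos, hsplit]
  nlinarith
end

section
/- Under the hypotheses of the previous two statements (B bounded measurable, L_λ continuous on B, existence of interior θ' with L_λ(θ') < M_λ, and C, B∖C of positive measure), for every α ∈ (Δ(δ₀), 1) the equation Δ(δ) = α has a unique solution δ ∈ (δ₀, ∞). -/
open MeasureTheory Real Set

variable {n : ℕ}

lemma aux_int (s : Set (EuclideanSpace ℝ (Fin n))) (hfin : volume s ≠ ⊤)
    (L : EuclideanSpace ℝ (Fin n) → ℝ) (hL : Continuous L) (K : ℝ)
    (hK : ∀ θ ∈ s, |L θ| ≤ K) (δ : ℝ) (hs : MeasurableSet s) :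
    IntegrableOn (fun θ => Real.exp (-δ * L θ)) s := by
  apply Measure.integrableOn_of_bounded (M := Real.exp (|δ| * K)) hfin
    (Continuous.aestronglyMeasurable (by continuity))
  filter_upwards [ae_restrict_mem hs] with θ hθ
  rw [Real.norm_eq_abs, abs_of_pos (Real.exp_pos _)]
  apply Real.exp_le_exp.2
  calc -δ * L θ ≤ |(-δ) * L θ| := le_abs_self _
    _ = |δ| * |L θ| := by rw [abs_mul, abs_neg]
    _ ≤ |δ| * K := by
        exact mul_le_mul_of_nonneg_left (hK θ hθ) (abs_nonneg _)

lemma aux_pos (s : Set (EuclideanSpace ℝ (Fin n))) (hs : MeasurableSet s)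
    (hfin : volume s ≠ ⊤) (hpos : 0 < volume s)
    (L : EuclideanSpace ℝ (Fin n) → ℝ) (hL : Continuous L) (K : ℝ)
    (hK : ∀ θ ∈ s, |L θ| ≤ K) (δ : ℝ) :
    0 < ∫ θ in s, Real.exp (-δ * L θ) := by
  rw [setIntegral_pos_iff_support_of_nonneg_ae
    (Filter.Eventually.of_forall fun θ => (Real.exp_pos _).le)
    (aux_int s hfin L hL K hK δ hs)]
  have : Function.support (fun θ : EuclideanSpace ℝ (Fin n) => Real.exp (-δ * L θ)) = Set.univ := by
    ext θ; simp [Function.mem_support, (Real.exp_pos _).ne']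
  rw [this, Set.univ_inter]; exact hpos

lemma aux_cont (s : Set (EuclideanSpace ℝ (Fin n))) (hs : MeasurableSet s)
    (hfin : volume s ≠ ⊤)
    (L : EuclideanSpace ℝ (Fin n) → ℝ) (hL : Continuous L) (K : ℝ) (hK0 : 0 ≤ K)
    (hK : ∀ θ ∈ s, |L θ| ≤ K) :
    Continuous fun δ : ℝ => ∫ θ in s, Real.exp (-δ * L θ) := by
  rw [continuous_iff_continuousAt]
  intro δ₀
  apply continuousAt_of_dominated (bound := fun _ => Real.exp ((|δ₀| + 1) * K))
  · exact Filter.Eventually.of_forall fun δ =>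
      Continuous.aestronglyMeasurable (by continuity)
  · filter_upwards [Metric.ball_mem_nhds δ₀ one_pos] with δ hδ
    filter_upwards [ae_restrict_mem hs] with θ hθ
    rw [Real.norm_eq_abs, abs_of_pos (Real.exp_pos _)]
    apply Real.exp_le_exp.2
    have hδ' : |δ| ≤ |δ₀| + 1 := by
      have := mem_ball_iff_norm.1 hδ
      calc |δ| = |δ₀ + (δ - δ₀)| := by ring_nf
        _ ≤ |δ₀| + |δ - δ₀| := abs_add_le _ _
        _ ≤ |δ₀| + 1 := by rw [Real.norm_eq_abs] at this; linarith
    calc -δ * L θ ≤ |δ| * |L θ| := by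
          calc -δ * L θ ≤ |(-δ) * L θ| := le_abs_self _
            _ = |δ| * |L θ| := by rw [abs_mul, abs_neg]
      _ ≤ (|δ₀| + 1) * K :=
          mul_le_mul hδ' (hK θ hθ) (abs_nonneg _) (by linarith [abs_nonneg δ₀])
  · exact integrableOn_const hfin
  · exact Filter.Eventually.of_forall fun θ => (by fun_prop : Continuous fun δ : ℝ => Real.exp (-δ * L θ)).continuousAt
lemma aux_mono (Cs Ds : Set (EuclideanSpace ℝ (Fin n)))
    (hCm : MeasurableSet Cs) (hDm : MeasurableSet Ds)
    (hCfin : volume Cs ≠ ⊤) (hDfin : volume Ds ≠ ⊤)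
    (hCpos : 0 < volume Cs) (hDpos : 0 < volume Ds)
    (L : EuclideanSpace ℝ (Fin n) → ℝ) (hL : Continuous L) (K : ℝ)
    (hKC : ∀ θ ∈ Cs, |L θ| ≤ K) (hKD : ∀ θ ∈ Ds, |L θ| ≤ K)
    (hlt : ∀ x ∈ Cs, ∀ y ∈ Ds, L x < L y) {a b : ℝ} (hab : a < b) :
    (∫ x in Cs, Real.exp (-a * L x)) * (∫ y in Ds, Real.exp (-b * L y)) <
      (∫ x in Cs, Real.exp (-b * L x)) * (∫ y in Ds, Real.exp (-a * L y)) := by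
  have intCa := aux_int Cs hCfin L hL K hKC a hCm
  have intCb := aux_int Cs hCfin L hL K hKC b hCm
  have intDa := aux_int Ds hDfin L hL K hKD a hDm
  have intDb := aux_int Ds hDfin L hL K hKD b hDm
  have h1 : (∫ x in Cs, Real.exp (-a * L x)) * (∫ y in Ds, Real.exp (-b * L y)) =
      ∫ z in Cs ×ˢ Ds, Real.exp (-a * L z.1) * Real.exp (-b * L z.2) :=
    (setIntegral_prod_mul _ _ _ _).symm
  have h2 : (∫ x in Cs, Real.exp (-b * L x)) * (∫ y in Ds, Real.exp (-a * L y)) =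
      ∫ z in Cs ×ˢ Ds, Real.exp (-b * L z.1) * Real.exp (-a * L z.2) :=
    (setIntegral_prod_mul _ _ _ _).symm
  rw [h1, h2]
  have i1 : IntegrableOn (fun z : EuclideanSpace ℝ (Fin n) × EuclideanSpace ℝ (Fin n) =>
      Real.exp (-a * L z.1) * Real.exp (-b * L z.2)) (Cs ×ˢ Ds) (volume.prod volume) := by
    rw [IntegrableOn, ← Measure.prod_restrict]
    exact intCa.mul_prod intDb
  have i2 : IntegrableOn (fun z : EuclideanSpace ℝ (Fin n) × EuclideanSpace ℝ (Fin n) =>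
      Real.exp (-b * L z.1) * Real.exp (-a * L z.2)) (Cs ×ˢ Ds) (volume.prod volume) := by
    rw [IntegrableOn, ← Measure.prod_restrict]
    exact intCb.mul_prod intDa
  have hptw : ∀ z ∈ Cs ×ˢ Ds, Real.exp (-a * L z.1) * Real.exp (-b * L z.2)
      < Real.exp (-b * L z.1) * Real.exp (-a * L z.2) := by
    rintro ⟨x, y⟩ ⟨hx, hy⟩
    rw [← Real.exp_add, ← Real.exp_add]
    apply Real.exp_lt_exp.2
    have := hlt x hx y hy
    nlinarith
  have i3 : IntegrableOn (fun z : EuclideanSpace ℝ (Fin n) × EuclideanSpace ℝ (Fin n) =>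
      Real.exp (-b * L z.1) * Real.exp (-a * L z.2) - Real.exp (-a * L z.1) * Real.exp (-b * L z.2))
      (Cs ×ˢ Ds) (volume.prod volume) := i2.sub i1
  have key : 0 < ∫ z in Cs ×ˢ Ds, (Real.exp (-b * L z.1) * Real.exp (-a * L z.2)
      - Real.exp (-a * L z.1) * Real.exp (-b * L z.2)) ∂(volume.prod volume) := by
    rw [setIntegral_pos_iff_support_of_nonneg_ae ?hnn i3]
    case hnn =>
      filter_upwards [ae_restrict_mem (hCm.prod hDm)] with z hz
      exact sub_nonneg.2 (hptw z hz).le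
    refine lt_of_lt_of_le ?_ (measure_mono (subset_inter (fun z hz => ?_) subset_rfl))
    · calc (0 : ENNReal) < volume Cs * volume Ds := ENNReal.mul_pos hCpos.ne' hDpos.ne'
        _ = (volume.prod volume) (Cs ×ˢ Ds) := (Measure.prod_prod _ _).symm
    · exact sub_ne_zero.2 (hptw z hz).ne'
  rw [integral_sub i2 i1] at key
  have e1 : ∫ z in Cs ×ˢ Ds, Real.exp (-a * L z.1) * Real.exp (-b * L z.2) =
      ∫ z in Cs ×ˢ Ds, Real.exp (-a * L z.1) * Real.exp (-b * L z.2) ∂(volume.prod volume) := by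
    rw [← Measure.volume_eq_prod]
  have e2 : ∫ z in Cs ×ˢ Ds, Real.exp (-b * L z.1) * Real.exp (-a * L z.2) =
      ∫ z in Cs ×ˢ Ds, Real.exp (-b * L z.1) * Real.exp (-a * L z.2) ∂(volume.prod volume) := by
    rw [← Measure.volume_eq_prod]
  rw [e1, e2]
  linarith

theorem stmt4 {n : ℕ} (B : Set (EuclideanSpace ℝ (Fin n))) (hB : MeasurableSet B)
    (hBbdd : Bornology.IsBounded B)
    (Ll : EuclideanSpace ℝ (Fin n) → ℝ) (hLl : Continuous Ll)
    (Lmin δ₀ Ml : ℝ) (hδ₀ : 0 ≤ δ₀)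
    (hbdd : ∀ θ ∈ B, Lmin ≤ Ll θ)
    (hpos : 0 < ∫ θ in B, Real.exp (-δ₀ * Ll θ))
    (θ' : EuclideanSpace ℝ (Fin n)) (hθ' : θ' ∈ interior B) (hθ'M : Ll θ' < Ml)
    (C : Set (EuclideanSpace ℝ (Fin n))) (hCdef : C = {θ ∈ B | Ll θ ≤ Ml})
    (hCpos : 0 < volume C) (hBCpos : 0 < volume (B \ C)) :
    ∀ α : ℝ,
      (∫ θ in C, Real.exp (-δ₀ * Ll θ)) / (∫ θ in B, Real.exp (-δ₀ * Ll θ)) < α → α < 1 →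
      ∃! δ : ℝ, δ ∈ Set.Ioi δ₀ ∧
        (∫ θ in C, Real.exp (-δ * Ll θ)) / (∫ θ in B, Real.exp (-δ * Ll θ)) = α := by
  intro α hα1 hα2
  set D : Set (EuclideanSpace ℝ (Fin n)) := B \ C with hDdef
  have hCB : C ⊆ B := by rw [hCdef]; exact fun θ hθ => hθ.1
  have hCm : MeasurableSet C := by
    have : C = B ∩ {θ | Ll θ ≤ Ml} := by rw [hCdef]; ext θ; simp [Set.mem_sep_iff]
    rw [this]
    exact hB.inter (measurableSet_le hLl.measurable measurable_const)
  have hDm : MeasurableSet D := hB.diff hCm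
  have hBfin : volume B ≠ ⊤ := hBbdd.measure_lt_top.ne
  have hCfin : volume C ≠ ⊤ := ((measure_mono hCB).trans_lt hBbdd.measure_lt_top).ne
  have hDfin : volume D ≠ ⊤ :=
    ((measure_mono (Set.diff_subset)).trans_lt hBbdd.measure_lt_top).ne
  -- bound on |Ll| over B
  obtain ⟨K0, hK0⟩ := hBbdd.isCompact_closure.exists_bound_of_continuousOn hLl.continuousOn
  set K : ℝ := max K0 0 with hKdef
  have hK0' : (0:ℝ) ≤ K := le_max_right _ _
  have hKB : ∀ θ ∈ B, |Ll θ| ≤ K := fun θ hθ => by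
    have := hK0 θ (subset_closure hθ)
    rw [Real.norm_eq_abs] at this
    exact this.trans (le_max_left _ _)
  have hKC : ∀ θ ∈ C, |Ll θ| ≤ K := fun θ hθ => hKB θ (hCB hθ)
  have hKD : ∀ θ ∈ D, |Ll θ| ≤ K := fun θ hθ => hKB θ hθ.1
  have intC : ∀ δ : ℝ, IntegrableOn (fun θ => Real.exp (-δ * Ll θ)) C :=
    fun δ => aux_int C hCfin Ll hLl K hKC δ hCm
  have intD : ∀ δ : ℝ, IntegrableOn (fun θ => Real.exp (-δ * Ll θ)) D :=
    fun δ => aux_int D hDfin Ll hLl K hKD δ hDm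
  have hsplit : ∀ δ : ℝ, (∫ θ in B, Real.exp (-δ * Ll θ))
      = (∫ θ in C, Real.exp (-δ * Ll θ)) + (∫ θ in D, Real.exp (-δ * Ll θ)) := by
    intro δ
    rw [← setIntegral_union Set.disjoint_sdiff_right hDm (intC δ) (intD δ),
      Set.union_diff_cancel hCB]
  have fpos : ∀ δ : ℝ, 0 < ∫ θ in C, Real.exp (-δ * Ll θ) :=
    fun δ => aux_pos C hCm hCfin hCpos Ll hLl K hKC δ
  have gpos : ∀ δ : ℝ, 0 < ∫ θ in D, Real.exp (-δ * Ll θ) :=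
    fun δ => aux_pos D hDm hDfin hBCpos Ll hLl K hKD δ
  set Δ : ℝ → ℝ := fun δ =>
    (∫ θ in C, Real.exp (-δ * Ll θ)) /
      ((∫ θ in C, Real.exp (-δ * Ll θ)) + (∫ θ in D, Real.exp (-δ * Ll θ))) with hΔdef
  have hΔeq : ∀ δ : ℝ, (∫ θ in C, Real.exp (-δ * Ll θ)) / (∫ θ in B, Real.exp (-δ * Ll θ))
      = Δ δ := fun δ => by rw [hsplit δ]
  have hlt : ∀ x ∈ C, ∀ y ∈ D, Ll x < Ll y := by
    intro x hx y hy
    have hxC : Ll x ≤ Ml := by rw [hCdef] at hx; exact hx.2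
    have hyD : Ml < Ll y := by
      by_contra h
      exact hy.2 (by rw [hCdef]; exact ⟨hy.1, not_lt.1 h⟩)
    linarith
  have mono : StrictMono Δ := by
    intro a b hab
    have key := aux_mono C D hCm hDm hCfin hDfin hCpos hBCpos Ll hLl K hKC hKD hlt hab
    rw [hΔdef]
    simp only
    rw [div_lt_div_iff₀ (by linarith [fpos a, gpos a]) (by linarith [fpos b, gpos b])]
    nlinarith [key]
  have cont : Continuous Δ := by
    apply Continuous.div (aux_cont C hCm hCfin Ll hLl K hK0' hKC)
      ((aux_cont C hCm hCfin Ll hLl K hK0' hKC).add (aux_cont D hDm hDfin Ll hLl K hK0' hKD))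
    intro δ
    have := fpos δ; have := gpos δ
    exact (add_pos (fpos δ) (gpos δ)).ne'
  rw [hΔeq δ₀] at hα1
  have hα0 : 0 < α := lt_trans (by have := fpos δ₀; have := gpos δ₀; positivity) hα1
  -- ball around θ'
  set M' : ℝ := (Ll θ' + Ml) / 2 with hM'def
  have hM'lt : M' < Ml := by rw [hM'def]; linarith
  have hθ'M' : Ll θ' < M' := by rw [hM'def]; linarith
  obtain ⟨r, hr, hball⟩ := Metric.isOpen_iff.1
    (isOpen_interior.inter (isOpen_Iio.preimage hLl)) θ' ⟨hθ', hθ'M'⟩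
  have hballC : Metric.ball θ' r ⊆ C := by
    intro z hz
    obtain ⟨hz1, hz2⟩ := hball hz
    rw [hCdef]
    exact ⟨interior_subset hz1, le_of_lt (lt_trans hz2 hM'lt)⟩
  set v : ℝ := (volume (Metric.ball θ' r)).toReal with hvdef
  have hv : 0 < v := ENNReal.toReal_pos (Metric.measure_ball_pos volume θ' hr).ne'
    (Metric.isBounded_ball.measure_lt_top.ne)
  set w : ℝ := (volume D).toReal with hwdef
  have hw : 0 < w := ENNReal.toReal_pos hBCpos.ne' hDfin
  have flb : ∀ δ : ℝ, 0 ≤ δ → v * Real.exp (-δ * M') ≤ ∫ θ in C, Real.exp (-δ * Ll θ) := by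
    intro δ hδ
    have h1 : ∫ θ in Metric.ball θ' r, Real.exp (-δ * Ll θ) ≤ ∫ θ in C, Real.exp (-δ * Ll θ) :=
      setIntegral_mono_set (intC δ) (Filter.Eventually.of_forall fun θ => (Real.exp_pos _).le)
        (HasSubset.Subset.eventuallyLE hballC)
    have h2 : v * Real.exp (-δ * M') ≤ ∫ θ in Metric.ball θ' r, Real.exp (-δ * Ll θ) := by
      have hc : ∫ _θ in Metric.ball θ' r, Real.exp (-δ * M') = v * Real.exp (-δ * M') := by
        rw [setIntegral_const, smul_eq_mul, measureReal_def]
      rw [← hc]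
      apply setIntegral_mono_on (integrableOn_const Metric.isBounded_ball.measure_lt_top.ne)
        ((intC δ).mono_set hballC) Metric.isOpen_ball.measurableSet
      intro x hx
      apply Real.exp_le_exp.2
      have : Ll x < M' := (hball hx).2
      nlinarith
    linarith
  have gub : ∀ δ : ℝ, 0 ≤ δ → (∫ θ in D, Real.exp (-δ * Ll θ)) ≤ w * Real.exp (-δ * Ml) := by
    intro δ hδ
    have hc : ∫ _θ in D, Real.exp (-δ * Ml) = w * Real.exp (-δ * Ml) := by
      rw [setIntegral_const, smul_eq_mul, measureReal_def]
    rw [← hc]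
    apply setIntegral_mono_on (intD δ)
      (integrableOn_const hDfin) hDm
    intro y hy
    apply Real.exp_le_exp.2
    have hyD : Ml < Ll y := by
      by_contra h
      exact hy.2 (by rw [hCdef]; exact ⟨hy.1, not_lt.1 h⟩)
    nlinarith
  -- choose δ₁ large
  have hε : (0:ℝ) < Ml - M' := by linarith
  have htend : Filter.Tendsto (fun δ : ℝ => α * w * Real.exp (-δ * (Ml - M')))
      Filter.atTop (nhds 0) := by
    have h1 : Filter.Tendsto (fun δ : ℝ => -δ * (Ml - M')) Filter.atTop Filter.atBot := by
      apply Filter.Tendsto.atBot_mul_const hε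
      exact Filter.tendsto_neg_atTop_atBot
    have := (Real.tendsto_exp_atBot.comp h1).const_mul (α * w)
    simpa using this
  have hev : ∀ᶠ δ : ℝ in Filter.atTop,
      α * w * Real.exp (-δ * (Ml - M')) < (1 - α) * v := by
    apply Filter.Tendsto.eventually_lt htend tendsto_const_nhds
    exact mul_pos (by linarith) hv
  obtain ⟨δ₁, hδ₁gt, hδ₁ineq⟩ :=
    ((Filter.eventually_gt_atTop δ₀).and hev).exists
  have hδ₁0 : (0:ℝ) ≤ δ₁ := le_of_lt (lt_of_le_of_lt hδ₀ hδ₁gt)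
  have hΔ1 : α < Δ δ₁ := by
    rw [hΔdef]
    simp only
    rw [lt_div_iff₀ (by linarith [fpos δ₁, gpos δ₁])]
    have h1 := flb δ₁ hδ₁0
    have h2 := gub δ₁ hδ₁0
    have h3 : Real.exp (-δ₁ * Ml) = Real.exp (-δ₁ * (Ml - M')) * Real.exp (-δ₁ * M') := by
      rw [← Real.exp_add]; ring_nf
    have h4 : α * w * Real.exp (-δ₁ * Ml) < (1 - α) * v * Real.exp (-δ₁ * M') := by
      rw [h3]
      calc α * w * (Real.exp (-δ₁ * (Ml - M')) * Real.exp (-δ₁ * M'))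
          = (α * w * Real.exp (-δ₁ * (Ml - M'))) * Real.exp (-δ₁ * M') := by ring
        _ < (1 - α) * v * Real.exp (-δ₁ * M') := by
            apply mul_lt_mul_of_pos_right hδ₁ineq (Real.exp_pos _)
    nlinarith [fpos δ₁, gpos δ₁, Real.exp_pos (-δ₁ * M'), Real.exp_pos (-δ₁ * Ml)]
  -- IVT
  obtain ⟨δ, hδIcc, hΔδ⟩ := intermediate_value_Icc (le_of_lt hδ₁gt) cont.continuousOn
    ⟨hα1.le, hΔ1.le⟩
  have hδgt : δ₀ < δ := mono.lt_iff_lt.1 (by rw [hΔδ]; exact hα1)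
  refine ⟨δ, ⟨hδgt, by rw [hΔeq δ]; exact hΔδ⟩, ?_⟩
  rintro y ⟨hy1, hy2⟩
  rw [hΔeq y] at hy2
  exact mono.injective (hy2.trans hΔδ.symm)
end

section
/- Let B ⊆ ℝⁿ be measurable, L_λ : ℝⁿ → ℝ bounded below by L_min on B, δ₀ ≥ 0, and let g : B → ℝ be a measurable function. Suppose ∫_B exp(-δ₀ L_λ), ∫_B |g|·exp(-δ₀ L_λ), ∫_B L_λ·exp(-δ₀ L_λ), and ∫_B |g|·L_λ·exp(-δ₀ L_λ) all exist and are finite. Define G(δ) = (∫_B |g(θ)| exp(-δ L_λ(θ)) dθ)/(∫_B exp(-δ L_λ(θ)) dθ), i.e., G(δ) = E_δ[|g|] under the Gibbs density p_δ. Then G is differentiable on (δ₀, ∞) and G'(δ) = -Cov_δ(|g(θ)|, L_λ(θ)), where Cov_δ denotes covariance with respect to p_δ. -/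
open MeasureTheory Real

private lemma exp_bd {L Lmin δ₀ x b : ℝ} (hL : Lmin ≤ L) (hx : δ₀ ≤ x) (hb : x ≤ b) :
    Real.exp (-x * L) ≤ Real.exp ((b - δ₀) * |Lmin|) * Real.exp (-δ₀ * L) := by
  rw [← Real.exp_add]
  apply Real.exp_le_exp.2
  have h1 : -(x - δ₀) * L ≤ (x - δ₀) * |Lmin| := by
    have : -(x - δ₀) * L ≤ -(x - δ₀) * Lmin := by nlinarith
    have h2 : -(x - δ₀) * Lmin ≤ (x - δ₀) * |Lmin| := by
      nlinarith [neg_abs_le Lmin, abs_nonneg Lmin]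
    linarith
  have h3 : (x - δ₀) * |Lmin| ≤ (b - δ₀) * |Lmin| := by
    nlinarith [abs_nonneg Lmin]
  nlinarith

private lemma int_aux {α : Type*} [MeasurableSpace α] {μ : Measure α}
    {f L : α → ℝ} (hf : AEStronglyMeasurable f μ) (hL : AEStronglyMeasurable L μ)
    {Lmin δ₀ δ : ℝ} (hδ : δ₀ ≤ δ)
    (hbdd : ∀ᵐ θ ∂μ, Lmin ≤ L θ)
    (h1 : Integrable (fun θ => f θ * Real.exp (-δ₀ * L θ)) μ) :
    Integrable (fun θ => f θ * Real.exp (-δ * L θ)) μ := by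
  apply Integrable.mono' ((h1.norm).const_mul (Real.exp ((δ - δ₀) * |Lmin|)))
  · exact hf.mul ((Real.measurable_exp.comp_aemeasurable (hL.aemeasurable.const_mul (-δ))).aestronglyMeasurable)
  · filter_upwards [hbdd] with θ hθ
    have h2 := exp_bd (x := δ) (b := δ) hθ hδ le_rfl
    have h3 : (0:ℝ) < Real.exp (-δ₀ * L θ) := Real.exp_pos _
    simp only [norm_mul, Real.norm_eq_abs, Real.abs_exp]
    calc |f θ| * Real.exp (-δ * L θ)
        ≤ |f θ| * (Real.exp ((δ - δ₀) * |Lmin|) * Real.exp (-δ₀ * L θ)) := by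
          exact mul_le_mul_of_nonneg_left h2 (abs_nonneg _)
      _ = Real.exp ((δ - δ₀) * |Lmin|) * (|f θ| * Real.exp (-δ₀ * L θ)) := by ring

private lemma deriv_aux {α : Type*} [MeasurableSpace α] {μ : Measure α}
    {f L : α → ℝ} (hf : AEStronglyMeasurable f μ) (hL : AEStronglyMeasurable L μ)
    {Lmin δ₀ δ : ℝ} (hδ : δ₀ < δ)
    (hbdd : ∀ᵐ θ ∂μ, Lmin ≤ L θ)
    (h1 : Integrable (fun θ => f θ * Real.exp (-δ₀ * L θ)) μ)
    (h2 : Integrable (fun θ => f θ * L θ * Real.exp (-δ₀ * L θ)) μ) :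
    HasDerivAt (fun t => ∫ θ, f θ * Real.exp (-t * L θ) ∂μ)
      (-∫ θ, f θ * L θ * Real.exp (-δ * L θ) ∂μ) δ := by
  set ε := (δ - δ₀) / 2 with hε
  have hεpos : 0 < ε := by simp [hε]; linarith
  set C := Real.exp ((δ + ε - δ₀) * |Lmin|) with hC
  have key := hasDerivAt_integral_of_dominated_loc_of_deriv_le (μ := μ)
    (F := fun x θ => f θ * Real.exp (-x * L θ))
    (F' := fun x θ => -(f θ * L θ * Real.exp (-x * L θ)))
    (x₀ := δ) (bound := fun θ => C * ‖f θ * L θ * Real.exp (-δ₀ * L θ)‖)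
    (Metric.ball_mem_nhds δ hεpos) ?_ ?_ ?_ ?_ ?_ ?_
  · have := key.2
    rwa [integral_neg] at this
  · filter_upwards with x
    exact hf.mul ((Real.measurable_exp.comp_aemeasurable (hL.aemeasurable.const_mul (-x))).aestronglyMeasurable)
  · exact int_aux hf hL hδ.le hbdd h1
  · exact ((hf.mul hL).mul
      ((Real.measurable_exp.comp_aemeasurable (hL.aemeasurable.const_mul (-δ))).aestronglyMeasurable)).neg
  · filter_upwards [hbdd] with θ hθ
    intro x hx
    rw [Metric.mem_ball, Real.dist_eq, abs_lt] at hx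
    have hx1 : δ₀ ≤ x := by linarith [hx.1, hεpos]
    have hx2 : x ≤ δ + ε := by linarith [hx.2]
    have h3 := exp_bd (x := x) (b := δ + ε) hθ hx1 hx2
    have h4 : (0:ℝ) < Real.exp (-δ₀ * L θ) := Real.exp_pos _
    simp only [norm_neg, norm_mul, Real.norm_eq_abs, Real.abs_exp]
    calc |f θ| * |L θ| * Real.exp (-x * L θ)
        ≤ |f θ| * |L θ| * (C * Real.exp (-δ₀ * L θ)) := by
          exact mul_le_mul_of_nonneg_left h3 (by positivity)
      _ = C * (|f θ| * |L θ| * Real.exp (-δ₀ * L θ)) := by ring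
  · exact (h2.norm).const_mul C
  · filter_upwards with θ
    intro x _
    have hd : HasDerivAt (fun x : ℝ => -x * L θ) (-1 * L θ) x :=
      (hasDerivAt_id x).neg.mul_const (L θ)
    have := (hd.exp).const_mul (f θ)
    exact this.congr_deriv (by ring)

theorem stmt5 {n : ℕ} (B : Set (EuclideanSpace ℝ (Fin n))) (hB : MeasurableSet B)
    (Ll g : EuclideanSpace ℝ (Fin n) → ℝ) (hLl : Measurable Ll) (hg : Measurable g)
    (Lmin δ₀ : ℝ) (hδ₀ : 0 ≤ δ₀)
    (hbdd : ∀ θ ∈ B, Lmin ≤ Ll θ)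
    (hint1 : IntegrableOn (fun θ => Real.exp (-δ₀ * Ll θ)) B)
    (hpos : 0 < ∫ θ in B, Real.exp (-δ₀ * Ll θ))
    (hint2 : IntegrableOn (fun θ => |g θ| * Real.exp (-δ₀ * Ll θ)) B)
    (hint3 : IntegrableOn (fun θ => Ll θ * Real.exp (-δ₀ * Ll θ)) B)
    (hint4 : IntegrableOn (fun θ => |g θ| * Ll θ * Real.exp (-δ₀ * Ll θ)) B) :
    ∀ δ, δ₀ < δ →
      HasDerivAt
        (fun t => (∫ θ in B, |g θ| * Real.exp (-t * Ll θ)) / (∫ θ in B, Real.exp (-t * Ll θ)))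
        (-((∫ θ in B, |g θ| * Ll θ * (Real.exp (-δ * Ll θ) / ∫ γ in B, Real.exp (-δ * Ll γ))) -
            (∫ θ in B, |g θ| * (Real.exp (-δ * Ll θ) / ∫ γ in B, Real.exp (-δ * Ll γ))) *
              (∫ θ in B, Ll θ * (Real.exp (-δ * Ll θ) / ∫ γ in B, Real.exp (-δ * Ll γ)))))
        δ := by
  intro δ hδ
  have μ := MeasureTheory.volume.restrict B
  have hbdd' : ∀ᵐ θ ∂(volume.restrict B), Lmin ≤ Ll θ :=
    (ae_restrict_iff' hB).2 (ae_of_all _ hbdd)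
  have hLm : AEStronglyMeasurable Ll (volume.restrict B) :=
    hLl.aestronglyMeasurable
  have hgm : AEStronglyMeasurable (fun θ => |g θ|) (volume.restrict B) :=
    hg.abs.aestronglyMeasurable
  have h1m : AEStronglyMeasurable (fun _ : EuclideanSpace ℝ (Fin n) => (1:ℝ))
      (volume.restrict B) := aestronglyMeasurable_const
  -- derivative of denominator
  have hint1' : Integrable (fun θ => (1:ℝ) * Real.exp (-δ₀ * Ll θ)) (volume.restrict B) := by
    simpa using hint1.integrable
  have hint3' : Integrable (fun θ => (1:ℝ) * Ll θ * Real.exp (-δ₀ * Ll θ))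
      (volume.restrict B) := by simpa using hint3.integrable
  have hD := deriv_aux h1m hLm hδ hbdd' hint1' hint3'
  simp only [one_mul] at hD
  -- derivative of numerator
  have hN := deriv_aux hgm hLm hδ hbdd' hint2 hint4
  -- integrability at δ
  have hDint : Integrable (fun θ => Real.exp (-δ * Ll θ)) (volume.restrict B) := by
    have := int_aux h1m hLm hδ.le hbdd' hint1'
    simpa using this
  -- positivity of denominator at δ
  have hsupp : ∀ t : ℝ, Function.support (fun θ : EuclideanSpace ℝ (Fin n) =>
      Real.exp (-t * Ll θ)) = Set.univ :=
    fun t => Set.eq_univ_of_forall fun θ => (Real.exp_pos _).ne'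
  have hDpos : 0 < ∫ θ in B, Real.exp (-δ * Ll θ) := by
    rw [integral_pos_iff_support_of_nonneg_ae
      (ae_of_all _ fun θ => (Real.exp_pos _).le) hDint, hsupp]
    rw [integral_pos_iff_support_of_nonneg_ae
      (ae_of_all _ fun θ => (Real.exp_pos _).le) hint1, hsupp] at hpos
    exact hpos
  have hquot := hN.div hD (ne_of_gt hDpos)
  refine hquot.congr_deriv ?_
  symm
  simp only [← mul_div_assoc, integral_div]
  have hD0 : (∫ θ in B, Real.exp (-δ * Ll θ)) ≠ 0 := ne_of_gt hDpos
  have hγ : (∫ γ in B, Real.exp (-δ * Ll γ)) = ∫ θ in B, Real.exp (-δ * Ll θ) := rfl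
  rw [hγ]
  have halg : ∀ (K N M D : ℝ), D ≠ 0 →
      -(K / D - N / D * M / D) = (-K * D - N * -M) / D ^ 2 := by
    intros K N M D hD
    field_simp
    ring
  exact halg _ _ _ _ hD0
end

section
/- Let B ⊆ ℝⁿ be measurable, L_λ bounded below on B, and let u, v : B → ℝ be nonnegative measurable functions. Suppose for some δ₀ ≥ 0 the integrals ∫_B exp(-δ₀ L_λ), ∫_B u·exp(-δ₀ L_λ), ∫_B v·exp(-δ₀ L_λ), ∫_B L_λ exp(-δ₀ L_λ), ∫_B u·L_λ·exp(-δ₀ L_λ), and ∫_B v·L_λ·exp(-δ₀ L_λ) all exist and are finite. Define F(δ) = E_δ[u]·E_δ[v], where E_δ is expectation under the Gibbs density p_δ(θ) ∝ exp(-δ L_λ(θ)) on B. Then F is differentiable on (δ₀,∞) with F'(δ) = -Cov_δ(u, L_λ)·E_δ[v] - E_δ[u]·Cov_δ(v, L_λ). -/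
open MeasureTheory Real

private lemma abs_mul_exp_bound {Lmin ε L s : ℝ} (hε : 0 < ε) (h1 : ε ≤ s) (h2 : s ≤ 3*ε)
    (hL : Lmin ≤ L) :
    |L| * Real.exp (-(s * L)) ≤ 1/ε + |Lmin| * Real.exp (3*ε*|Lmin|) := by
  rcases le_or_gt 0 L with h|h
  · have hA : |L| * Real.exp (-(s*L)) ≤ 1/ε := by
      rw [abs_of_nonneg h]
      have e1 : Real.exp (-(s*L)) ≤ Real.exp (-(ε*L)) := Real.exp_le_exp.2 (by nlinarith)
      have e2 : L ≤ Real.exp (ε * L) / ε := by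
        rw [le_div_iff₀ hε]; nlinarith [Real.add_one_le_exp (ε*L)]
      calc L * Real.exp (-(s*L)) ≤ L * Real.exp (-(ε*L)) := by
            exact mul_le_mul_of_nonneg_left e1 h
        _ ≤ (Real.exp (ε*L)/ε) * Real.exp (-(ε*L)) := by
            exact mul_le_mul_of_nonneg_right e2 (Real.exp_pos _).le
        _ = 1/ε := by
            rw [Real.exp_neg]; field_simp
    have : 0 ≤ |Lmin| * Real.exp (3*ε*|Lmin|) := by positivity
    linarith
  · have hL1 : |L| ≤ |Lmin| := by
      rw [abs_of_neg h, abs_of_neg (lt_of_le_of_lt hL h)]; linarith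
    have hL2 : Real.exp (-(s*L)) ≤ Real.exp (3*ε*|Lmin|) := by
      apply Real.exp_le_exp.2
      have hnL : -L ≤ |Lmin| := by rw [abs_of_neg h] at hL1; linarith
      nlinarith [abs_nonneg Lmin]
    have : |L| * Real.exp (-(s*L)) ≤ |Lmin| * Real.exp (3*ε*|Lmin|) :=
      mul_le_mul hL1 hL2 (Real.exp_pos _).le (abs_nonneg _)
    have : (0:ℝ) ≤ 1/ε := by positivity
    linarith

private lemma aux_int_s6 {n : ℕ} {B : Set (EuclideanSpace ℝ (Fin n))} (hB : MeasurableSet B)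
    {Ll f : EuclideanSpace ℝ (Fin n) → ℝ} (hLl : Measurable Ll) (hf : Measurable f)
    {Lmin δ₀ : ℝ} (hbdd : ∀ θ ∈ B, Lmin ≤ Ll θ)
    (hfi : IntegrableOn (fun θ => f θ * Real.exp (-δ₀ * Ll θ)) B)
    {t : ℝ} (ht : δ₀ ≤ t) :
    IntegrableOn (fun θ => f θ * Real.exp (-t * Ll θ)) B := by
  have hmeas : AEStronglyMeasurable (fun θ => f θ * Real.exp (-t * Ll θ)) (volume.restrict B) :=
    (hf.mul ((hLl.const_mul (-t)).exp)).aestronglyMeasurable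
  refine Integrable.mono' ((hfi.abs).const_mul (Real.exp ((t - δ₀) * (-Lmin)))) hmeas ?_
  filter_upwards [ae_restrict_mem hB] with θ hθ
  have h1 : Real.exp (-t * Ll θ) ≤ Real.exp ((t - δ₀) * (-Lmin)) * Real.exp (-δ₀ * Ll θ) := by
    rw [← Real.exp_add]; apply Real.exp_le_exp.2; nlinarith [hbdd θ hθ]
  have h2 : ‖f θ * Real.exp (-t * Ll θ)‖ = |f θ| * Real.exp (-t * Ll θ) := by
    rw [Real.norm_eq_abs, abs_mul, abs_of_pos (Real.exp_pos _)]
  have h3 : |f θ * Real.exp (-δ₀ * Ll θ)| = |f θ| * Real.exp (-δ₀ * Ll θ) := by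
    rw [abs_mul, abs_of_pos (Real.exp_pos _)]
  rw [h2, h3]
  nlinarith [abs_nonneg (f θ), Real.exp_pos (-t * Ll θ), Real.exp_pos (-δ₀ * Ll θ),
    Real.exp_pos ((t - δ₀) * (-Lmin)), mul_le_mul_of_nonneg_left h1 (abs_nonneg (f θ))]

private lemma aux_deriv {n : ℕ} {B : Set (EuclideanSpace ℝ (Fin n))} (hB : MeasurableSet B)
    {Ll f : EuclideanSpace ℝ (Fin n) → ℝ} (hLl : Measurable Ll) (hf : Measurable f)
    {Lmin δ₀ : ℝ} (hbdd : ∀ θ ∈ B, Lmin ≤ Ll θ)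
    (hfi : IntegrableOn (fun θ => f θ * Real.exp (-δ₀ * Ll θ)) B)
    {δ : ℝ} (hδ : δ₀ < δ) :
    HasDerivAt (fun t => ∫ θ in B, f θ * Real.exp (-t * Ll θ))
      (-∫ θ in B, f θ * Ll θ * Real.exp (-δ * Ll θ)) δ := by
  set ε := (δ - δ₀)/2 with hε
  have εpos : 0 < ε := by simp [hε]; linarith
  set C := 1/ε + |Lmin| * Real.exp (3*ε*|Lmin|) with hC
  have hCpos : 0 ≤ C := by positivity
  have key := hasDerivAt_integral_of_dominated_loc_of_deriv_le (μ := volume.restrict B)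
    (F := fun t θ => f θ * Real.exp (-t * Ll θ))
    (F' := fun t θ => -(f θ * Ll θ * Real.exp (-t * Ll θ)))
    (x₀ := δ) (bound := fun θ => C * |f θ * Real.exp (-δ₀ * Ll θ)|) (Metric.ball_mem_nhds δ εpos)
    (Filter.Eventually.of_forall fun x =>
      ((hf.mul ((hLl.const_mul (-x)).exp)).aestronglyMeasurable))
    (aux_int_s6 hB hLl hf hbdd hfi hδ.le)
    (((hf.mul hLl).mul ((hLl.const_mul (-δ)).exp)).neg.aestronglyMeasurable)
    ?_ ((hfi.abs).const_mul C) ?_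
  · rw [integral_neg] at key
    exact key.2
  · -- bound
    filter_upwards [ae_restrict_mem hB] with θ hθ x hx
    have hx1 : δ - ε < x := by
      have := abs_lt.1 (mem_ball_iff_norm.1 hx); linarith [this.1]
    have hx2 : x < δ + ε := by
      have := abs_lt.1 (mem_ball_iff_norm.1 hx); linarith [this.2]
    have hs1 : ε ≤ x - δ₀ := by simp only [hε] at *; linarith
    have hs2 : x - δ₀ ≤ 3*ε := by simp only [hε] at *; linarith
    have hb := abs_mul_exp_bound εpos hs1 hs2 (hbdd θ hθ)
    have hsplit : Real.exp (-x * Ll θ) =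
        Real.exp (-((x - δ₀) * Ll θ)) * Real.exp (-δ₀ * Ll θ) := by
      rw [← Real.exp_add]; ring_nf
    have h2 : ‖-(f θ * Ll θ * Real.exp (-x * Ll θ))‖
        = |f θ| * (|Ll θ| * Real.exp (-((x - δ₀) * Ll θ))) * Real.exp (-δ₀ * Ll θ) := by
      rw [norm_neg, Real.norm_eq_abs, abs_mul, abs_mul, abs_of_pos (Real.exp_pos _), hsplit]
      ring
    have h3 : |f θ * Real.exp (-δ₀ * Ll θ)| = |f θ| * Real.exp (-δ₀ * Ll θ) := by
      rw [abs_mul, abs_of_pos (Real.exp_pos _)]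
    rw [h2, h3]
    have : |f θ| * (|Ll θ| * Real.exp (-((x - δ₀) * Ll θ))) ≤ |f θ| * C :=
      mul_le_mul_of_nonneg_left hb (abs_nonneg _)
    nlinarith [Real.exp_pos (-δ₀ * Ll θ), abs_nonneg (f θ)]
  · -- differentiability
    filter_upwards with θ x hx
    have h1 : HasDerivAt (fun y : ℝ => -y * Ll θ) (-Ll θ) x := by
      simpa using ((hasDerivAt_id x).neg.mul_const (Ll θ))
    have h2 := (h1.exp).const_mul (f θ)
    convert h2 using 1
    · rfl
    ring

theorem stmt6 {n : ℕ} (B : Set (EuclideanSpace ℝ (Fin n))) (hB : MeasurableSet B)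
    (Ll u v : EuclideanSpace ℝ (Fin n) → ℝ)
    (hLl : Measurable Ll) (hu : Measurable u) (hv : Measurable v)
    (hu0 : ∀ θ ∈ B, 0 ≤ u θ) (hv0 : ∀ θ ∈ B, 0 ≤ v θ)
    (Lmin δ₀ : ℝ) (hδ₀ : 0 ≤ δ₀)
    (hbdd : ∀ θ ∈ B, Lmin ≤ Ll θ)
    (hint1 : IntegrableOn (fun θ => Real.exp (-δ₀ * Ll θ)) B)
    (hpos : 0 < ∫ θ in B, Real.exp (-δ₀ * Ll θ))
    (hintu : IntegrableOn (fun θ => u θ * Real.exp (-δ₀ * Ll θ)) B)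
    (hintv : IntegrableOn (fun θ => v θ * Real.exp (-δ₀ * Ll θ)) B)
    (hintL : IntegrableOn (fun θ => Ll θ * Real.exp (-δ₀ * Ll θ)) B)
    (hintuL : IntegrableOn (fun θ => u θ * Ll θ * Real.exp (-δ₀ * Ll θ)) B)
    (hintvL : IntegrableOn (fun θ => v θ * Ll θ * Real.exp (-δ₀ * Ll θ)) B) :
    ∀ δ, δ₀ < δ →
      HasDerivAt
        (fun t => ((∫ θ in B, u θ * Real.exp (-t * Ll θ)) / (∫ θ in B, Real.exp (-t * Ll θ))) *
          ((∫ θ in B, v θ * Real.exp (-t * Ll θ)) / (∫ θ in B, Real.exp (-t * Ll θ))))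
        (-((∫ θ in B, u θ * Ll θ * (Real.exp (-δ * Ll θ) / ∫ γ in B, Real.exp (-δ * Ll γ))) -
              (∫ θ in B, u θ * (Real.exp (-δ * Ll θ) / ∫ γ in B, Real.exp (-δ * Ll γ))) *
                (∫ θ in B, Ll θ * (Real.exp (-δ * Ll θ) / ∫ γ in B, Real.exp (-δ * Ll γ)))) *
            (∫ θ in B, v θ * (Real.exp (-δ * Ll θ) / ∫ γ in B, Real.exp (-δ * Ll γ))) -
          (∫ θ in B, u θ * (Real.exp (-δ * Ll θ) / ∫ γ in B, Real.exp (-δ * Ll γ))) *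
            ((∫ θ in B, v θ * Ll θ * (Real.exp (-δ * Ll θ) / ∫ γ in B, Real.exp (-δ * Ll γ))) -
              (∫ θ in B, v θ * (Real.exp (-δ * Ll θ) / ∫ γ in B, Real.exp (-δ * Ll γ))) *
                (∫ θ in B, Ll θ * (Real.exp (-δ * Ll θ) / ∫ γ in B, Real.exp (-δ * Ll γ)))))
        δ := by
  intro δ hδ
  have hone : Measurable (fun _ : EuclideanSpace ℝ (Fin n) => (1:ℝ)) := measurable_const
  have hint1' : IntegrableOn (fun θ => (1:ℝ) * Real.exp (-δ₀ * Ll θ)) B := by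
    simpa using hint1
  -- derivative of the normalizing constant
  have hZ : HasDerivAt (fun t => ∫ θ in B, Real.exp (-t * Ll θ))
      (-∫ θ in B, Ll θ * Real.exp (-δ * Ll θ)) δ := by
    have := aux_deriv hB hLl hone hbdd hint1' hδ
    simpa using this
  have hU : HasDerivAt (fun t => ∫ θ in B, u θ * Real.exp (-t * Ll θ))
      (-∫ θ in B, u θ * Ll θ * Real.exp (-δ * Ll θ)) δ :=
    aux_deriv hB hLl hu hbdd hintu hδ
  have hV : HasDerivAt (fun t => ∫ θ in B, v θ * Real.exp (-t * Ll θ))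
      (-∫ θ in B, v θ * Ll θ * Real.exp (-δ * Ll θ)) δ :=
    aux_deriv hB hLl hv hbdd hintv hδ
  -- positivity of Z δ
  have hμB : 0 < volume B := by
    have := (setIntegral_pos_iff_support_of_nonneg_ae
      (Filter.Eventually.of_forall fun θ => (Real.exp_pos _).le) hint1).1 hpos
    refine lt_of_lt_of_le this (measure_mono ?_)
    exact Set.inter_subset_right
  have hintZδ : IntegrableOn (fun θ => Real.exp (-δ * Ll θ)) B := by
    have := aux_int_s6 hB hLl hone hbdd hint1' hδ.le
    simpa using this
  have hZpos : 0 < ∫ θ in B, Real.exp (-δ * Ll θ) := by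
    refine (setIntegral_pos_iff_support_of_nonneg_ae
      (Filter.Eventually.of_forall fun θ => (Real.exp_pos _).le) hintZδ).2 ?_
    have : Function.support (fun θ : EuclideanSpace ℝ (Fin n) => Real.exp (-δ * Ll θ)) = Set.univ := by
      ext θ; simp [Function.support, Real.exp_ne_zero]
    rw [this, Set.univ_inter]
    exact hμB
  have hZne : (∫ θ in B, Real.exp (-δ * Ll θ)) ≠ 0 := ne_of_gt hZpos
  have hF := (hU.div hZ hZne).mul (hV.div hZ hZne)
  -- rewrite target integrals
  have rw1 : ∀ g : EuclideanSpace ℝ (Fin n) → ℝ,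
      (∫ θ in B, g θ * (Real.exp (-δ * Ll θ) / ∫ γ in B, Real.exp (-δ * Ll γ)))
      = (∫ θ in B, g θ * Real.exp (-δ * Ll θ)) / (∫ γ in B, Real.exp (-δ * Ll γ)) := by
    intro g
    rw [← integral_div]
    congr 1 with θ
    ring
  convert hF using 1
  · rfl
  · rfl
  · rfl
  rw [rw1 (fun θ => u θ * Ll θ), rw1 u, rw1 Ll, rw1 v, rw1 (fun θ => v θ * Ll θ)]
  simp only [Pi.div_apply]
  set Z := ∫ θ in B, Real.exp (-δ * Ll θ)
  set A := ∫ θ in B, u θ * Real.exp (-δ * Ll θ)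
  set Bv := ∫ θ in B, v θ * Real.exp (-δ * Ll θ)
  set AL := ∫ θ in B, u θ * Ll θ * Real.exp (-δ * Ll θ)
  set BL := ∫ θ in B, v θ * Ll θ * Real.exp (-δ * Ll θ)
  set ZL := ∫ θ in B, Ll θ * Real.exp (-δ * Ll θ)
  field_simp
  ring
end

section
/- Let B ⊆ ℝⁿ be a bounded measurable set of finite positive measure, f : B → ℝ measurable and bounded below. Fix M̃ < M and suppose the set C̃ = {f ≤ M̃} ∩ B has positive measure V₀ > 0, and let C = {f ≤ M} ∩ B. If δ > 0 satisfies Vol(B∖C)/((1-α)·V₀) < exp((M - M̃)·δ) for some α ∈ (0,1), then ∫_{B∖C} exp(-δ f) < (1-α)·∫_C exp(-δ f), and consequently (∫_C exp(-δ f))/(∫_B exp(-δ f)) > α. -/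
open MeasureTheory Real

theorem stmt9 {n : ℕ} (B : Set (EuclideanSpace ℝ (Fin n))) (hB : MeasurableSet B)
    (hBbdd : Bornology.IsBounded B) (hBfin : volume B < ⊤) (hBpos : 0 < volume B)
    (f : EuclideanSpace ℝ (Fin n) → ℝ) (hf : Measurable f)
    (Lmin : ℝ) (hbdd : ∀ θ ∈ B, Lmin ≤ f θ)
    (Mt M : ℝ) (hMtM : Mt < M)
    (Ct C : Set (EuclideanSpace ℝ (Fin n)))
    (hCt : Ct = {θ | f θ ≤ Mt} ∩ B) (hC : C = {θ | f θ ≤ M} ∩ B)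
    (V₀ : ℝ) (hV₀def : V₀ = (volume Ct).toReal) (hV₀ : 0 < V₀)
    (α : ℝ) (hα : α ∈ Set.Ioo (0 : ℝ) 1)
    (δ : ℝ) (hδ : 0 < δ)
    (hkey : (volume (B \ C)).toReal / ((1 - α) * V₀) < Real.exp ((M - Mt) * δ)) :
    (∫ θ in B \ C, Real.exp (-δ * f θ)) < (1 - α) * ∫ θ in C, Real.exp (-δ * f θ) ∧
      α < (∫ θ in C, Real.exp (-δ * f θ)) / (∫ θ in B, Real.exp (-δ * f θ)) := by
  obtain ⟨hα0, hα1⟩ := hα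
  have h1α : (0:ℝ) < 1 - α := by linarith
  set g : EuclideanSpace ℝ (Fin n) → ℝ := fun θ => Real.exp (-δ * f θ) with hg
  have hgm : Measurable g := Real.measurable_exp.comp (hf.const_mul (-δ))
  have hCm : MeasurableSet C := by
    rw [hC]; exact (hf measurableSet_Iic).inter hB
  have hCtm : MeasurableSet Ct := by
    rw [hCt]; exact (hf measurableSet_Iic).inter hB
  have hCsub : C ⊆ B := by rw [hC]; exact Set.inter_subset_right
  have hCtC : Ct ⊆ C := by
    rw [hCt, hC]; exact Set.inter_subset_inter_left _ (fun x hx => le_trans hx hMtM.le)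
  have hgpos : ∀ θ, 0 < g θ := fun θ => Real.exp_pos _
  -- integrability on B
  have hintB : IntegrableOn g B volume := by
    refine Measure.integrableOn_of_bounded hBfin.ne hgm.aestronglyMeasurable (M := Real.exp (-δ * Lmin)) ?_
    filter_upwards [ae_restrict_mem hB] with θ hθ
    rw [Real.norm_eq_abs, abs_of_pos (hgpos θ)]
    exact Real.exp_le_exp.mpr (by nlinarith [hbdd θ hθ])
  have hintC : IntegrableOn g C volume := hintB.mono_set hCsub
  have hintCt : IntegrableOn g Ct volume := hintB.mono_set (hCtC.trans hCsub)
  have hintBC : IntegrableOn g (B \ C) volume := hintB.mono_set Set.diff_subset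
  have hvolBC : volume (B \ C) < ⊤ := lt_of_le_of_lt (measure_mono Set.diff_subset) hBfin
  have hvolCt : volume Ct < ⊤ := lt_of_le_of_lt (measure_mono (hCtC.trans hCsub)) hBfin
  -- upper bound on B \ C
  have hupper : ∫ θ in B \ C, g θ ≤ Real.exp (-δ * M) * (volume (B \ C)).toReal := by
    have hpt : ∀ θ ∈ B \ C, g θ ≤ (fun _ => Real.exp (-δ * M)) θ := by
      intro θ hθ
      have hMf : M < f θ := by
        by_contra h
        exact hθ.2 (hC ▸ ⟨le_of_not_gt h, hθ.1⟩)
      exact Real.exp_le_exp.mpr (by nlinarith)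
    calc ∫ θ in B \ C, g θ ≤ ∫ _θ in B \ C, Real.exp (-δ * M) :=
          setIntegral_mono_on hintBC (integrableOn_const hvolBC.ne)
            (hB.diff hCm) hpt
      _ = Real.exp (-δ * M) * (volume (B \ C)).toReal := by
          rw [setIntegral_const, smul_eq_mul, mul_comm, measureReal_def]
  -- lower bound on C
  have hlower : Real.exp (-δ * Mt) * V₀ ≤ ∫ θ in C, g θ := by
    have h1 : Real.exp (-δ * Mt) * V₀ ≤ ∫ θ in Ct, g θ := by
      have hpt : ∀ θ ∈ Ct, (fun _ => Real.exp (-δ * Mt)) θ ≤ g θ := by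
        intro θ hθ
        have hfθ : f θ ≤ Mt := by rw [hCt] at hθ; exact hθ.1
        exact Real.exp_le_exp.mpr (by nlinarith)
      calc Real.exp (-δ * Mt) * V₀ = ∫ _θ in Ct, Real.exp (-δ * Mt) := by
            rw [setIntegral_const, smul_eq_mul, mul_comm, hV₀def, measureReal_def]
        _ ≤ ∫ θ in Ct, g θ :=
            setIntegral_mono_on (integrableOn_const hvolCt.ne) hintCt hCtm hpt
    have h2 : ∫ θ in Ct, g θ ≤ ∫ θ in C, g θ :=
      setIntegral_mono_set hintC (Filter.Eventually.of_forall fun θ => (hgpos θ).le)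
        (HasSubset.Subset.eventuallyLE hCtC)
    linarith
  -- key arithmetic
  have hkey2 : Real.exp (-δ * M) * (volume (B \ C)).toReal
      < (1 - α) * (Real.exp (-δ * Mt) * V₀) := by
    have hden : (0:ℝ) < (1 - α) * V₀ := by positivity
    have h := (div_lt_iff₀ hden).mp hkey
    have : Real.exp ((M - Mt) * δ) * Real.exp (-δ * M) = Real.exp (-δ * Mt) := by
      rw [← Real.exp_add]; ring_nf
    nlinarith [Real.exp_pos (-δ * M), (volume (B \ C)).toReal_nonneg,
      Real.exp_pos (-δ * Mt)]
  have hmain : (∫ θ in B \ C, g θ) < (1 - α) * ∫ θ in C, g θ := by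
    calc (∫ θ in B \ C, g θ) ≤ Real.exp (-δ * M) * (volume (B \ C)).toReal := hupper
      _ < (1 - α) * (Real.exp (-δ * Mt) * V₀) := hkey2
      _ ≤ (1 - α) * ∫ θ in C, g θ := by nlinarith
  refine ⟨hmain, ?_⟩
  have hsplit : (∫ θ in B, g θ) = (∫ θ in C, g θ) + ∫ θ in B \ C, g θ := by
    rw [← setIntegral_union disjoint_sdiff_self_right (hB.diff hCm) hintC hintBC,
      Set.union_diff_cancel hCsub]
  have hCpos : 0 < ∫ θ in C, g θ :=
    lt_of_lt_of_le (by positivity) hlower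
  have hBCnonneg : 0 ≤ ∫ θ in B \ C, g θ :=
    setIntegral_nonneg (hB.diff hCm) (fun θ _ => (hgpos θ).le)
  have hBint : 0 < ∫ θ in B, g θ := by rw [hsplit]; linarith
  rw [lt_div_iff₀ hBint, hsplit]
  nlinarith
end
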